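/- The modular automorphism is recovered from the square of the antipode and the character ε∘σ: for every a ∈ A, σ(a) = (id ⊗ (ε∘σ))(Δ(S²(a))), i.e. σ(a) = Σ S²(a)₍₁₎ · ε(σ(S²(a)₍₂₎)). (This expresses σ(a) = δ̂⁻¹ ⊳ S²(a), where δ̂⁻¹ = ε∘σ is the inverse of the modular element of the dual.) -/

import Mathlib

open TensorProduct HopfAlgebra

/-- `f ⊳ a = Σ a₍₁₎ f(a₍₂₎)` : the standard left action of a linear functional on `A`. -/
noncomputable def lAct {A : Type*} [Ring A] [HopfAlgebra ℂ A] (f : A →ₗ[ℂ] ℂ) : A →ₗ[ℂ] A :=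
  (TensorProduct.rid ℂ A).toLinearMap ∘ₗ LinearMap.lTensor A f ∘ₗ Coalgebra.comul

open Coalgebra LinearMap

namespace ModAux

variable {A : Type*} [Ring A] [HopfAlgebra ℂ A]

lemma repr_smul_right {ι : Type*} {a : A} (r : Coalgebra.Repr ℂ a ι) :
    ∑ i ∈ r.index, counit (R := ℂ) (r.left i) • r.right i = a := by
  simpa only [map_sum, TensorProduct.lid_tmul, one_smul] using
    congrArg (TensorProduct.lid ℂ A) (sum_counit_tmul_eq r)

lemma repr_smul_left {ι : Type*} {a : A} (r : Coalgebra.Repr ℂ a ι) :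
    ∑ i ∈ r.index, counit (R := ℂ) (r.right i) • r.left i = a := by
  simpa only [map_sum, TensorProduct.rid_tmul, one_smul] using
    congrArg (TensorProduct.rid ℂ A) (sum_tmul_counit_eq r)

lemma sum3 {M : Type*} [AddCommMonoid M] [Module ℂ M]
    (Θ : A ⊗[ℂ] (A ⊗[ℂ] A) →ₗ[ℂ] M) {ι : Type*} {κ Λ : ι → Type*} {a : A}
    (r : Coalgebra.Repr ℂ a ι)
    (c : (i : r.ι) → Coalgebra.Repr ℂ (r.left i) (κ i))
    (d : (i : r.ι) → Coalgebra.Repr ℂ (r.right i) (Λ i)) :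
    ∑ i ∈ r.index, ∑ j ∈ (c i).index,
        Θ ((c i).left j ⊗ₜ[ℂ] ((c i).right j ⊗ₜ[ℂ] r.right i))
      = ∑ i ∈ r.index, ∑ j ∈ (d i).index,
        Θ (r.left i ⊗ₜ[ℂ] ((d i).left j ⊗ₜ[ℂ] (d i).right j)) := by
  simpa only [map_sum] using congrArg Θ (sum_tmul_tmul_eq r c d)

section Conv

variable {B : Type*} [Ring B] [Algebra ℂ B]

noncomputable def conv (f g : A →ₗ[ℂ] B) : A →ₗ[ℂ] B :=
  LinearMap.mul' ℂ B ∘ₗ TensorProduct.map f g ∘ₗ Coalgebra.comul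

lemma conv_repr (f g : A →ₗ[ℂ] B) {ι : Type*} {a : A} (r : Coalgebra.Repr ℂ a ι) :
    conv f g a = ∑ i ∈ r.index, f (r.left i) * g (r.right i) := by
  simp [conv, ← r.eq, map_sum]

noncomputable def cunit : A →ₗ[ℂ] B := Algebra.linearMap ℂ B ∘ₗ Coalgebra.counit

lemma conv_cunit_left (f : A →ₗ[ℂ] B) : conv cunit f = f := by
  ext a
  rw [conv_repr _ _ (ℛ ℂ a)]
  calc ∑ i ∈ (ℛ ℂ a).index, cunit ((ℛ ℂ a).left i) * f ((ℛ ℂ a).right i)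
      = ∑ i ∈ (ℛ ℂ a).index, counit (R := ℂ) ((ℛ ℂ a).left i) • f ((ℛ ℂ a).right i) := by
        simp [cunit, Algebra.smul_def]
    _ = f a := by
        conv_rhs => rw [← repr_smul_right (ℛ ℂ a)]
        rw [map_sum]; simp

lemma conv_cunit_right (f : A →ₗ[ℂ] B) : conv f cunit = f := by
  ext a
  rw [conv_repr _ _ (ℛ ℂ a)]
  calc ∑ i ∈ (ℛ ℂ a).index, f ((ℛ ℂ a).left i) * cunit ((ℛ ℂ a).right i)
      = ∑ i ∈ (ℛ ℂ a).index, counit (R := ℂ) ((ℛ ℂ a).right i) • f ((ℛ ℂ a).left i) := by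
        simp [cunit, Algebra.smul_def, Algebra.commutes]
    _ = f a := by
        conv_rhs => rw [← repr_smul_left (ℛ ℂ a)]
        rw [map_sum]; simp

lemma conv_assoc (f g h : A →ₗ[ℂ] B) : conv (conv f g) h = conv f (conv g h) := by
  ext a
  have key := sum3 (LinearMap.mul' ℂ B ∘ₗ TensorProduct.map f
      (LinearMap.mul' ℂ B ∘ₗ TensorProduct.map g h)) (ℛ ℂ a)
    (fun i => ℛ ℂ ((ℛ ℂ a).left i)) (fun i => ℛ ℂ ((ℛ ℂ a).right i))
  simp only [comp_apply, map_tmul, mul'_apply] at key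
  rw [conv_repr (conv f g) h (ℛ ℂ a), conv_repr f (conv g h) (ℛ ℂ a)]
  calc ∑ i ∈ (ℛ ℂ a).index, conv f g ((ℛ ℂ a).left i) * h ((ℛ ℂ a).right i)
      = ∑ i ∈ (ℛ ℂ a).index, ∑ j ∈ (ℛ ℂ ((ℛ ℂ a).left i)).index,
          f ((ℛ ℂ ((ℛ ℂ a).left i)).left j) *
            ((g ((ℛ ℂ ((ℛ ℂ a).left i)).right j)) * h ((ℛ ℂ a).right i)) := by
        refine Finset.sum_congr rfl fun i _ => ?_
        rw [conv_repr f g (ℛ ℂ ((ℛ ℂ a).left i)), Finset.sum_mul]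
        simp [mul_assoc]
    _ = ∑ i ∈ (ℛ ℂ a).index, ∑ j ∈ (ℛ ℂ ((ℛ ℂ a).right i)).index,
          f ((ℛ ℂ a).left i) * (g ((ℛ ℂ ((ℛ ℂ a).right i)).left j) *
            h ((ℛ ℂ ((ℛ ℂ a).right i)).right j)) := key
    _ = ∑ i ∈ (ℛ ℂ a).index, f ((ℛ ℂ a).left i) * conv g h ((ℛ ℂ a).right i) := by
        refine Finset.sum_congr rfl fun i _ => ?_
        rw [conv_repr g h (ℛ ℂ ((ℛ ℂ a).right i)), Finset.mul_sum]

end Conv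


section Antipode

local notation "S" => antipode (R := ℂ) (A := A)

lemma conv_comulS_comul :
    conv ((Coalgebra.comul : A →ₗ[ℂ] A ⊗[ℂ] A) ∘ₗ S) Coalgebra.comul
      = (cunit : A →ₗ[ℂ] A ⊗[ℂ] A) := by
  ext a
  rw [conv_repr _ _ (ℛ ℂ a)]
  calc ∑ i ∈ (ℛ ℂ a).index,
        ((Coalgebra.comul ∘ₗ S) ((ℛ ℂ a).left i)) * Coalgebra.comul ((ℛ ℂ a).right i)
      = Coalgebra.comul (∑ i ∈ (ℛ ℂ a).index, S ((ℛ ℂ a).left i) * (ℛ ℂ a).right i) := by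
        rw [map_sum]
        exact Finset.sum_congr rfl fun i _ => by
          simp [Bialgebra.comul_mul]
    _ = cunit a := by
        rw [sum_antipode_mul_eq_smul (ℛ ℂ a)]
        simp [cunit, Algebra.smul_def, Algebra.TensorProduct.one_def]

lemma conv_comul_commSS :
    conv (Coalgebra.comul : A →ₗ[ℂ] A ⊗[ℂ] A)
        ((TensorProduct.comm ℂ A A).toLinearMap ∘ₗ TensorProduct.map S S ∘ₗ Coalgebra.comul)
      = (cunit : A →ₗ[ℂ] A ⊗[ℂ] A) := by
  ext a
  set r := ℛ ℂ a with hr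
  set Θ : A ⊗[ℂ] (A ⊗[ℂ] A) →ₗ[ℂ] A ⊗[ℂ] A :=
    LinearMap.mul' ℂ (A ⊗[ℂ] A) ∘ₗ TensorProduct.map Coalgebra.comul
      ((TensorProduct.comm ℂ A A).toLinearMap ∘ₗ TensorProduct.map S S) with hΘ
  have step1 : ∀ i ∈ r.index,
      (Coalgebra.comul (r.left i)) *
        (((TensorProduct.comm ℂ A A).toLinearMap ∘ₗ TensorProduct.map S S ∘ₗ Coalgebra.comul)
          (r.right i))
      = ∑ j ∈ (ℛ ℂ (r.right i)).index,
          Θ (r.left i ⊗ₜ[ℂ] ((ℛ ℂ (r.right i)).left j ⊗ₜ[ℂ] (ℛ ℂ (r.right i)).right j)) := by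
    intro i _
    have e0 : ((TensorProduct.comm ℂ A A).toLinearMap ∘ₗ TensorProduct.map S S ∘ₗ
        Coalgebra.comul) (r.right i)
        = ∑ j ∈ (ℛ ℂ (r.right i)).index,
            S ((ℛ ℂ (r.right i)).right j) ⊗ₜ[ℂ] S ((ℛ ℂ (r.right i)).left j) := by
      conv_lhs => rw [comp_apply, comp_apply, ← (ℛ ℂ (r.right i)).eq]
      simp [map_sum]
    rw [e0, Finset.mul_sum]
    exact Finset.sum_congr rfl fun j _ => by simp [hΘ]
  have step2 : ∀ i ∈ r.index, ∑ j ∈ (ℛ ℂ (r.left i)).index,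
      Θ ((ℛ ℂ (r.left i)).left j ⊗ₜ[ℂ] ((ℛ ℂ (r.left i)).right j ⊗ₜ[ℂ] r.right i))
      = (r.left i * S (r.right i)) ⊗ₜ[ℂ] (1 : A) := by
    intro i _
    have key := sum3 (TensorProduct.map (LinearMap.mulRight ℂ (S (r.right i)))
        (LinearMap.mul' ℂ A ∘ₗ LinearMap.lTensor A S)) (ℛ ℂ (r.left i))
      (fun m => ℛ ℂ ((ℛ ℂ (r.left i)).left m)) (fun m => ℛ ℂ ((ℛ ℂ (r.left i)).right m))
    simp only [comp_apply, map_tmul, mul'_apply, lTensor_tmul, mulRight_apply] at key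
    have e1 : ∀ j ∈ (ℛ ℂ (r.left i)).index,
        Θ ((ℛ ℂ (r.left i)).left j ⊗ₜ[ℂ] ((ℛ ℂ (r.left i)).right j ⊗ₜ[ℂ] r.right i))
        = ∑ p ∈ (ℛ ℂ ((ℛ ℂ (r.left i)).left j)).index,
            ((ℛ ℂ ((ℛ ℂ (r.left i)).left j)).left p * S (r.right i)) ⊗ₜ[ℂ]
              ((ℛ ℂ ((ℛ ℂ (r.left i)).left j)).right p * S ((ℛ ℂ (r.left i)).right j)) := by
      intro j _
      rw [hΘ]
      conv_lhs => rw [comp_apply, map_tmul, ← (ℛ ℂ ((ℛ ℂ (r.left i)).left j)).eq]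
      simp [TensorProduct.sum_tmul, map_sum, Algebra.TensorProduct.tmul_mul_tmul]
    rw [Finset.sum_congr rfl e1, key]
    have e2 : ∀ j ∈ (ℛ ℂ (r.left i)).index,
        ∑ p ∈ (ℛ ℂ ((ℛ ℂ (r.left i)).right j)).index,
          ((ℛ ℂ (r.left i)).left j * S (r.right i)) ⊗ₜ[ℂ]
            ((ℛ ℂ ((ℛ ℂ (r.left i)).right j)).left p *
              S ((ℛ ℂ ((ℛ ℂ (r.left i)).right j)).right p))
        = counit (R := ℂ) ((ℛ ℂ (r.left i)).right j) •
            (((ℛ ℂ (r.left i)).left j * S (r.right i)) ⊗ₜ[ℂ] (1 : A)) := by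
      intro j _
      rw [← TensorProduct.tmul_sum, sum_mul_antipode_eq_smul (ℛ ℂ ((ℛ ℂ (r.left i)).right j)),
        TensorProduct.tmul_smul]
    rw [Finset.sum_congr rfl e2]
    simp only [TensorProduct.smul_tmul', ← TensorProduct.sum_tmul, ← smul_mul_assoc,
      ← Finset.sum_mul]
    rw [repr_smul_left (ℛ ℂ (r.left i))]
  calc (conv (Coalgebra.comul : A →ₗ[ℂ] A ⊗[ℂ] A)
        ((TensorProduct.comm ℂ A A).toLinearMap ∘ₗ TensorProduct.map S S ∘ₗ
          Coalgebra.comul)) a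
      = ∑ i ∈ r.index, (Coalgebra.comul (r.left i)) *
          (((TensorProduct.comm ℂ A A).toLinearMap ∘ₗ TensorProduct.map S S ∘ₗ
            Coalgebra.comul) (r.right i)) := conv_repr _ _ r
    _ = ∑ i ∈ r.index, ∑ j ∈ (ℛ ℂ (r.right i)).index,
          Θ (r.left i ⊗ₜ[ℂ] ((ℛ ℂ (r.right i)).left j ⊗ₜ[ℂ] (ℛ ℂ (r.right i)).right j)) :=
        Finset.sum_congr rfl step1
    _ = ∑ i ∈ r.index, ∑ j ∈ (ℛ ℂ (r.left i)).index,
          Θ ((ℛ ℂ (r.left i)).left j ⊗ₜ[ℂ] ((ℛ ℂ (r.left i)).right j ⊗ₜ[ℂ] r.right i)) :=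
        (sum3 Θ r (fun i => ℛ ℂ (r.left i)) (fun i => ℛ ℂ (r.right i))).symm
    _ = ∑ i ∈ r.index, (r.left i * S (r.right i)) ⊗ₜ[ℂ] (1 : A) := Finset.sum_congr rfl step2
    _ = cunit a := by
        rw [← TensorProduct.sum_tmul, sum_mul_antipode_eq_smul r]
        simp [cunit, Algebra.smul_def, Algebra.TensorProduct.one_def,
          TensorProduct.smul_tmul']

lemma comul_antipode :
    (Coalgebra.comul : A →ₗ[ℂ] A ⊗[ℂ] A) ∘ₗ S
      = (TensorProduct.comm ℂ A A).toLinearMap ∘ₗ TensorProduct.map S S ∘ₗ Coalgebra.comul := by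
  calc (Coalgebra.comul : A →ₗ[ℂ] A ⊗[ℂ] A) ∘ₗ S
      = conv ((Coalgebra.comul : A →ₗ[ℂ] A ⊗[ℂ] A) ∘ₗ S)
          (conv (Coalgebra.comul : A →ₗ[ℂ] A ⊗[ℂ] A)
            ((TensorProduct.comm ℂ A A).toLinearMap ∘ₗ TensorProduct.map S S ∘ₗ
              Coalgebra.comul)) := by
        rw [conv_comul_commSS, conv_cunit_right]
    _ = conv (conv ((Coalgebra.comul : A →ₗ[ℂ] A ⊗[ℂ] A) ∘ₗ S) Coalgebra.comul)
          ((TensorProduct.comm ℂ A A).toLinearMap ∘ₗ TensorProduct.map S S ∘ₗ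
            Coalgebra.comul) := (conv_assoc _ _ _).symm
    _ = _ := by rw [conv_comulS_comul, conv_cunit_left]

/-- From a representation of `comul a`, a representation of `comul (S a)`. -/
noncomputable def sRepr {ι : Type*} {a : A} (r : Coalgebra.Repr ℂ a ι) :
    Coalgebra.Repr ℂ (S a) ι :=
  ⟨r.index, fun i => S (r.right i), fun i => S (r.left i), by
    have := congrFun (congrArg DFunLike.coe (comul_antipode (A := A))) a
    simp only [comp_apply, LinearEquiv.coe_coe] at this
    rw [this, ← r.eq, map_sum, map_sum]
    simp⟩

lemma counit_antipode (x : A) : counit (R := ℂ) (S x) = counit (R := ℂ) x := by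
  have h1 : ∑ i ∈ (ℛ ℂ x).index,
      counit (R := ℂ) (S ((ℛ ℂ x).left i) * (ℛ ℂ x).right i) = counit (R := ℂ) x := by
    rw [← map_sum, sum_antipode_mul_eq_smul (ℛ ℂ x)]
    simp
  calc counit (R := ℂ) (S x)
      = counit (R := ℂ) (S (∑ i ∈ (ℛ ℂ x).index,
          counit (R := ℂ) ((ℛ ℂ x).right i) • (ℛ ℂ x).left i)) := by
        conv_lhs => rw [← repr_smul_left (ℛ ℂ x)]
    _ = counit (R := ℂ) x := by
        rw [map_sum, map_sum, ← h1]
        exact Finset.sum_congr rfl fun i _ => by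
          simp [Bialgebra.counit_mul, smul_eq_mul, mul_comm]


lemma conv_char_right (ω : A →ₗ[ℂ] ℂ) (hω1 : ω 1 = 1)
    (hωm : ∀ x y : A, ω (x * y) = ω x * ω y) :
    conv ω (ω ∘ₗ S) = (cunit : A →ₗ[ℂ] ℂ) := by
  ext a
  rw [conv_repr _ _ (ℛ ℂ a)]
  have : ∑ i ∈ (ℛ ℂ a).index, ω ((ℛ ℂ a).left i) * (ω ∘ₗ S) ((ℛ ℂ a).right i)
      = ω (∑ i ∈ (ℛ ℂ a).index, (ℛ ℂ a).left i * S ((ℛ ℂ a).right i)) := by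
    rw [map_sum]
    exact Finset.sum_congr rfl fun i _ => by rw [comp_apply, hωm]
  rw [this, sum_mul_antipode_eq_smul (ℛ ℂ a)]
  simp [cunit, hω1]

lemma conv_char_left (ω : A →ₗ[ℂ] ℂ) (hω1 : ω 1 = 1)
    (hωm : ∀ x y : A, ω (x * y) = ω x * ω y) :
    conv (ω ∘ₗ S) ω = (cunit : A →ₗ[ℂ] ℂ) := by
  ext a
  rw [conv_repr _ _ (ℛ ℂ a)]
  have : ∑ i ∈ (ℛ ℂ a).index, (ω ∘ₗ S) ((ℛ ℂ a).left i) * ω ((ℛ ℂ a).right i)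
      = ω (∑ i ∈ (ℛ ℂ a).index, S ((ℛ ℂ a).left i) * (ℛ ℂ a).right i) := by
    rw [map_sum]
    exact Finset.sum_congr rfl fun i _ => by rw [comp_apply, hωm]
  rw [this, sum_antipode_mul_eq_smul (ℛ ℂ a)]
  simp [cunit, hω1]

lemma conv_char_SS (ω : A →ₗ[ℂ] ℂ) (hω1 : ω 1 = 1)
    (hωm : ∀ x y : A, ω (x * y) = ω x * ω y) :
    conv (ω ∘ₗ (S ∘ₗ S)) (ω ∘ₗ S) = (cunit : A →ₗ[ℂ] ℂ) := by
  ext a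
  have h1 := conv_repr ω (ω ∘ₗ S) (sRepr (ℛ ℂ a))
  rw [congrFun (congrArg DFunLike.coe (conv_char_right ω hω1 hωm)) (S a)] at h1
  simp only [sRepr] at h1
  rw [conv_repr _ _ (ℛ ℂ a)]
  calc ∑ i ∈ (ℛ ℂ a).index,
        (ω ∘ₗ (S ∘ₗ S)) ((ℛ ℂ a).left i) * (ω ∘ₗ S) ((ℛ ℂ a).right i)
      = ∑ i ∈ (ℛ ℂ a).index,
          ω (S ((ℛ ℂ a).right i)) * (ω ∘ₗ S) (S ((ℛ ℂ a).left i)) := by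
        exact Finset.sum_congr rfl fun i _ => by simp [mul_comm]
    _ = cunit (S a) := h1.symm
    _ = cunit a := by simp [cunit, counit_antipode]

lemma char_SS (ω : A →ₗ[ℂ] ℂ) (hω1 : ω 1 = 1)
    (hωm : ∀ x y : A, ω (x * y) = ω x * ω y) :
    ω ∘ₗ (S ∘ₗ S) = ω := by
  calc ω ∘ₗ (S ∘ₗ S)
      = conv (ω ∘ₗ (S ∘ₗ S)) (conv (ω ∘ₗ S) ω) := by
        rw [conv_char_left ω hω1 hωm, conv_cunit_right]
    _ = conv (conv (ω ∘ₗ (S ∘ₗ S)) (ω ∘ₗ S)) ω := (conv_assoc _ _ _).symm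
    _ = ω := by rw [conv_char_SS ω hω1 hωm, conv_cunit_left]

end Antipode


section Integral

local notation "S" => antipode (R := ℂ) (A := A)

/-- `lT f (Σ xᵢ ⊗ yᵢ) = Σ f(yᵢ) • xᵢ`. -/
noncomputable def lT (f : A →ₗ[ℂ] ℂ) : A ⊗[ℂ] A →ₗ[ℂ] A :=
  (TensorProduct.rid ℂ A).toLinearMap ∘ₗ LinearMap.lTensor A f

@[simp] lemma lT_tmul (f : A →ₗ[ℂ] ℂ) (x y : A) : lT f (x ⊗ₜ[ℂ] y) = f y • x := by
  simp [lT]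

lemma lT_rTensor (f : A →ₗ[ℂ] ℂ) (g : A →ₗ[ℂ] A) (w : A ⊗[ℂ] A) :
    lT f (g.rTensor A w) = g (lT f w) := by
  induction w using TensorProduct.induction_on with
  | zero => simp
  | tmul x y => simp
  | add x y hx hy => simp [hx, hy]

lemma lT_map (f : A →ₗ[ℂ] ℂ) (g h : A →ₗ[ℂ] A) (w : A ⊗[ℂ] A) :
    lT f (TensorProduct.map g h w) = g (lT (f ∘ₗ h) w) := by
  induction w using TensorProduct.induction_on with
  | zero => simp
  | tmul x y => simp
  | add x y hx hy => simp [hx, hy]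

lemma lT_repr (f : A →ₗ[ℂ] ℂ) {ι : Type*} {x : A} (r : Coalgebra.Repr ℂ x ι) :
    lT f (Coalgebra.comul x) = ∑ i ∈ r.index, f (r.right i) • r.left i := by
  rw [← r.eq, map_sum]
  simp

lemma lT_counit (x : A) : lT Coalgebra.counit (Coalgebra.comul x) = x := by
  rw [lT_repr Coalgebra.counit (ℛ ℂ x), repr_smul_left (ℛ ℂ x)]

variable (φ : A →ₗ[ℂ] ℂ)

/-- Strong left invariance. -/
lemma strong_invariance
    (hφL : ∀ a : A,
      (TensorProduct.rid ℂ A) (LinearMap.lTensor A φ (Coalgebra.comul a)) = φ a • (1 : A))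
    (a b : A) :
    lT (φ ∘ₗ LinearMap.mulRight ℂ b) ((S).rTensor A (Coalgebra.comul a))
      = lT (φ ∘ₗ LinearMap.mulLeft ℂ a) (Coalgebra.comul b) := by
  classical
  set r := ℛ ℂ a with hr
  set rb := ℛ ℂ b with hrb
  set Θ : A ⊗[ℂ] (A ⊗[ℂ] A) →ₗ[ℂ] A :=
    ∑ k ∈ rb.index, (LinearMap.mul' ℂ A ∘ₗ TensorProduct.map S
      (lT (φ ∘ₗ LinearMap.mulRight ℂ (rb.right k)) ∘ₗ
        (LinearMap.mulRight ℂ (rb.left k)).rTensor A)) with hΘ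
  have Θ_apply : ∀ (x u v : A), Θ (x ⊗ₜ[ℂ] (u ⊗ₜ[ℂ] v))
      = ∑ k ∈ rb.index, φ (v * rb.right k) • (S x * (u * rb.left k)) := by
    intro x u v
    rw [hΘ, LinearMap.sum_apply]
    refine Finset.sum_congr rfl fun k _ => ?_
    simp [mul_smul_comm]
  have lhs_eq : lT (φ ∘ₗ LinearMap.mulRight ℂ b) ((S).rTensor A (Coalgebra.comul a))
      = ∑ i ∈ r.index, ∑ j ∈ (ℛ ℂ (r.right i)).index,
          Θ (r.left i ⊗ₜ[ℂ] ((ℛ ℂ (r.right i)).left j ⊗ₜ[ℂ] (ℛ ℂ (r.right i)).right j)) := by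
    rw [← r.eq, map_sum, map_sum]
    refine Finset.sum_congr rfl fun i _ => ?_
    rw [rTensor_tmul, lT_tmul, comp_apply, mulRight_apply]
    have h1 : φ (r.right i * b) • S (r.left i)
        = S (r.left i) * ((TensorProduct.rid ℂ A)
            (LinearMap.lTensor A φ (Coalgebra.comul (r.right i * b)))) := by
      rw [hφL (r.right i * b), mul_smul_comm, mul_one]
    rw [h1]
    have h2 : Coalgebra.comul (r.right i * b)
        = ∑ j ∈ (ℛ ℂ (r.right i)).index, ∑ k ∈ rb.index,
            ((ℛ ℂ (r.right i)).left j * rb.left k) ⊗ₜ[ℂ]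
              ((ℛ ℂ (r.right i)).right j * rb.right k) := by
      rw [Bialgebra.comul_mul, ← (ℛ ℂ (r.right i)).eq, ← rb.eq, Finset.sum_mul_sum]
      simp [Algebra.TensorProduct.tmul_mul_tmul]
    rw [h2, map_sum, map_sum, Finset.mul_sum]
    refine Finset.sum_congr rfl fun j _ => ?_
    rw [Θ_apply, map_sum, map_sum, Finset.mul_sum]
    refine Finset.sum_congr rfl fun k _ => ?_
    simp [mul_smul_comm]
  rw [lhs_eq, ← sum3 Θ r (fun i => ℛ ℂ (r.left i)) (fun i => ℛ ℂ (r.right i))]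
  have collapse : ∀ i ∈ r.index, ∑ j ∈ (ℛ ℂ (r.left i)).index,
      Θ ((ℛ ℂ (r.left i)).left j ⊗ₜ[ℂ] ((ℛ ℂ (r.left i)).right j ⊗ₜ[ℂ] r.right i))
      = ∑ k ∈ rb.index, (counit (R := ℂ) (r.left i) * φ (r.right i * rb.right k)) •
          rb.left k := by
    intro i _
    have e1 : ∀ j ∈ (ℛ ℂ (r.left i)).index,
        Θ ((ℛ ℂ (r.left i)).left j ⊗ₜ[ℂ] ((ℛ ℂ (r.left i)).right j ⊗ₜ[ℂ] r.right i))
        = ∑ k ∈ rb.index, φ (r.right i * rb.right k) •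
            ((S ((ℛ ℂ (r.left i)).left j) * (ℛ ℂ (r.left i)).right j) * rb.left k) := by
      intro j _
      rw [Θ_apply]
      exact Finset.sum_congr rfl fun k _ => by rw [mul_assoc]
    rw [Finset.sum_congr rfl e1, Finset.sum_comm]
    refine Finset.sum_congr rfl fun k _ => ?_
    rw [← Finset.smul_sum, ← Finset.sum_mul, sum_antipode_mul_eq_smul (ℛ ℂ (r.left i)),
      smul_mul_assoc, one_mul, smul_smul, mul_comm]
  rw [Finset.sum_congr rfl collapse]
  rw [lT_repr (φ ∘ₗ LinearMap.mulLeft ℂ a) rb]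
  rw [Finset.sum_comm]
  refine Finset.sum_congr rfl fun k _ => ?_
  have : φ (a * rb.right k) = ∑ i ∈ r.index,
      counit (R := ℂ) (r.left i) * φ (r.right i * rb.right k) := by
    conv_lhs => rw [← repr_smul_right r]
    rw [Finset.sum_mul]
    simp [smul_mul_assoc]
  rw [comp_apply, mulLeft_apply, this, Finset.sum_smul]

end Integral


section Main

local notation "S" => antipode (R := ℂ) (A := A)

variable (hS : Function.Bijective (antipode (R := ℂ) (A := A)))
variable (φ : A →ₗ[ℂ] ℂ)

lemma rTensor_S_Sinv (w : A ⊗[ℂ] A) :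
    (S).rTensor A
      (((LinearEquiv.ofBijective S hS).symm.toLinearMap).rTensor A w) = w := by
  induction w using TensorProduct.induction_on with
  | zero => simp
  | tmul x y =>
      rw [rTensor_tmul, rTensor_tmul]
      congr 1
      have h1 := (LinearEquiv.ofBijective S hS).apply_symm_apply x
      rwa [LinearEquiv.ofBijective_apply] at h1
  | add x y hx hy => simp [hx, hy]

lemma rTensor_S_map (g : A →ₗ[ℂ] A) (w : A ⊗[ℂ] A) :
    (S).rTensor A (TensorProduct.map S g w) = TensorProduct.map (S ∘ₗ S) g w := by
  induction w using TensorProduct.induction_on with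
  | zero => simp
  | tmul x y => simp
  | add x y hx hy => simp [hx, hy]

lemma strong_invariance_inv
    (hφL : ∀ a : A,
      (TensorProduct.rid ℂ A) (LinearMap.lTensor A φ (Coalgebra.comul a)) = φ a • (1 : A))
    (b y : A) :
    lT (φ ∘ₗ LinearMap.mulRight ℂ y) (Coalgebra.comul b)
      = lT (φ ∘ₗ LinearMap.mulLeft ℂ b)
          (((LinearEquiv.ofBijective S hS).symm.toLinearMap).rTensor A
            (Coalgebra.comul y)) := by
  apply hS.injective
  calc S (lT (φ ∘ₗ LinearMap.mulRight ℂ y) (Coalgebra.comul b))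
      = lT (φ ∘ₗ LinearMap.mulRight ℂ y) ((S).rTensor A (Coalgebra.comul b)) :=
        (lT_rTensor _ _ _).symm
    _ = lT (φ ∘ₗ LinearMap.mulLeft ℂ b) (Coalgebra.comul y) := strong_invariance φ hφL b y
    _ = lT (φ ∘ₗ LinearMap.mulLeft ℂ b) ((S).rTensor A
          (((LinearEquiv.ofBijective S hS).symm.toLinearMap).rTensor A
            (Coalgebra.comul y))) := by rw [rTensor_S_Sinv]
    _ = S (lT (φ ∘ₗ LinearMap.mulLeft ℂ b)
          (((LinearEquiv.ofBijective S hS).symm.toLinearMap).rTensor A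
            (Coalgebra.comul y))) := lT_rTensor _ _ _

lemma separation (hφf2 : ∀ a : A, (∀ b : A, φ (b * a) = 0) → a = 0)
    (U : A ⊗[ℂ] A) (h : ∀ b : A, lT (φ ∘ₗ LinearMap.mulLeft ℂ b) U = 0) : U = 0 := by
  classical
  set ℬ := Module.Basis.ofVectorSpace ℂ A with hℬ
  set E : A ⊗[ℂ] A ≃ₗ[ℂ] (Module.Basis.ofVectorSpaceIndex ℂ A) →₀ A :=
    (TensorProduct.congr ℬ.repr (LinearEquiv.refl ℂ A)).trans
      (TensorProduct.finsuppScalarLeft ℂ A _) with hE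
  have key : ∀ (f : A →ₗ[ℂ] ℂ) (w : A ⊗[ℂ] A) (i), f ((E w) i) = ℬ.repr (lT f w) i := by
    intro f w i
    induction w using TensorProduct.induction_on with
    | zero => simp
    | tmul u v =>
        rw [hE]
        simp [TensorProduct.finsuppScalarLeft_apply_tmul_apply, mul_comm]
    | add x y hx hy => simp [map_add, hx, hy, Finsupp.add_apply]
  have hzero : ∀ i, E U i = 0 := by
    intro i
    refine hφf2 _ fun b => ?_
    have hk := key (φ ∘ₗ LinearMap.mulLeft ℂ b) U i
    rw [h b] at hk
    simpa using hk
  have : E U = 0 := Finsupp.ext hzero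
  have := congrArg E.symm this
  simpa using this

include hS in
lemma comul_sigma
    (hφL : ∀ a : A,
      (TensorProduct.rid ℂ A) (LinearMap.lTensor A φ (Coalgebra.comul a)) = φ a • (1 : A))
    (hφf2 : ∀ a : A, (∀ b : A, φ (b * a) = 0) → a = 0)
    (σ : A ≃ₐ[ℂ] A) (hσ : ∀ a b : A, φ (a * b) = φ (b * σ a)) (a : A) :
    Coalgebra.comul (σ a)
      = TensorProduct.map (S ∘ₗ S) σ.toLinearMap (Coalgebra.comul a) := by
  have hfun1 : ∀ b : A, (φ ∘ₗ LinearMap.mulLeft ℂ b) ∘ₗ σ.toLinearMap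
      = φ ∘ₗ LinearMap.mulRight ℂ b := by
    intro b; ext x; simpa using (hσ x b).symm
  have hfun2 : φ ∘ₗ LinearMap.mulLeft ℂ a = φ ∘ₗ LinearMap.mulRight ℂ (σ a) := by
    ext x; simpa using hσ a x
  have hU : TensorProduct.map S σ.toLinearMap (Coalgebra.comul a)
      - ((LinearEquiv.ofBijective S hS).symm.toLinearMap).rTensor A
          (Coalgebra.comul (σ a)) = 0 := by
    refine separation φ hφf2 _ fun b => ?_
    rw [map_sub]
    have t1 : lT (φ ∘ₗ LinearMap.mulLeft ℂ b)
        (TensorProduct.map S σ.toLinearMap (Coalgebra.comul a))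
        = lT (φ ∘ₗ LinearMap.mulLeft ℂ a) (Coalgebra.comul b) := by
      rw [lT_map, hfun1, ← lT_rTensor]
      exact strong_invariance φ hφL a b
    have t2 : lT (φ ∘ₗ LinearMap.mulLeft ℂ b)
        (((LinearEquiv.ofBijective S hS).symm.toLinearMap).rTensor A
          (Coalgebra.comul (σ a)))
        = lT (φ ∘ₗ LinearMap.mulLeft ℂ a) (Coalgebra.comul b) := by
      rw [← strong_invariance_inv hS φ hφL b (σ a), hfun2]
    rw [t1, t2, sub_self]
  have hU' := sub_eq_zero.mp hU
  calc Coalgebra.comul (σ a)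
      = (S).rTensor A (((LinearEquiv.ofBijective S hS).symm.toLinearMap).rTensor A
          (Coalgebra.comul (σ a))) := (rTensor_S_Sinv hS _).symm
    _ = (S).rTensor A (TensorProduct.map S σ.toLinearMap (Coalgebra.comul a)) := by
        rw [hU']
    _ = TensorProduct.map (S ∘ₗ S) σ.toLinearMap (Coalgebra.comul a) :=
        rTensor_S_map _ _

end Main

end ModAux

/-- The modular automorphism is recovered from `S²` and the character `ε∘σ`:
`σ(a) = (id ⊗ ε∘σ)(Δ(S²(a))) = δ̂⁻¹ ⊳ S²(a)`. -/
theorem modular_automorphism_eq_dual_modular_action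
    {A : Type*} [Ring A] [HopfAlgebra ℂ A]
    (hS : Function.Bijective (antipode (R := ℂ) (A := A)))
    (φ : A →ₗ[ℂ] ℂ) (hφ0 : φ ≠ 0)
    (hφL : ∀ a : A,
      (TensorProduct.rid ℂ A) (LinearMap.lTensor A φ (Coalgebra.comul a)) = φ a • (1 : A))
    (hφf1 : ∀ a : A, (∀ b : A, φ (a * b) = 0) → a = 0)
    (hφf2 : ∀ a : A, (∀ b : A, φ (b * a) = 0) → a = 0)
    (σ : A ≃ₐ[ℂ] A) (hσ : ∀ a b : A, φ (a * b) = φ (b * σ a)) :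
    ∀ a : A,
      σ a = lAct (Coalgebra.counit ∘ₗ σ.toLinearMap)
        (antipode (R := ℂ) (antipode (R := ℂ) a)) := by
  intro a
  set ω : A →ₗ[ℂ] ℂ := Coalgebra.counit ∘ₗ σ.toLinearMap with hω
  have hω1 : ω 1 = 1 := by simp [hω]
  have hωm : ∀ x y : A, ω (x * y) = ω x * ω y := by
    intro x y; simp [hω, map_mul]
  have hM := ModAux.comul_sigma hS φ hφL hφf2 σ hσ a
  have hchar : ∀ x : A, ω (antipode (R := ℂ) (antipode (R := ℂ) x)) = ω x := by
    intro x
    have := LinearMap.congr_fun (ModAux.char_SS ω hω1 hωm) x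
    simpa using this
  have lhs_eq : σ a = ∑ i ∈ (ℛ ℂ a).index, ω ((ℛ ℂ a).right i) •
      antipode (R := ℂ) (antipode (R := ℂ) ((ℛ ℂ a).left i)) := by
    calc σ a
        = ModAux.lT Coalgebra.counit (Coalgebra.comul (σ a)) := (ModAux.lT_counit _).symm
      _ = ModAux.lT Coalgebra.counit
            (TensorProduct.map (antipode (R := ℂ) ∘ₗ antipode (R := ℂ)) σ.toLinearMap
              (Coalgebra.comul a)) := by rw [hM]
      _ = (antipode (R := ℂ) ∘ₗ antipode (R := ℂ)) (ModAux.lT ω (Coalgebra.comul a)) :=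
          ModAux.lT_map _ _ _ _
      _ = _ := by
          rw [ModAux.lT_repr _ (ℛ ℂ a), map_sum]
          simp
  have rhs_eq : lAct ω (antipode (R := ℂ) (antipode (R := ℂ) a))
      = ∑ i ∈ (ℛ ℂ a).index, ω ((ℛ ℂ a).right i) •
          antipode (R := ℂ) (antipode (R := ℂ) ((ℛ ℂ a).left i)) := by
    have h0 : lAct ω (antipode (R := ℂ) (antipode (R := ℂ) a))
        = ModAux.lT ω (Coalgebra.comul (antipode (R := ℂ) (antipode (R := ℂ) a))) := rfl
    rw [h0, ModAux.lT_repr ω (ModAux.sRepr (ModAux.sRepr (ℛ ℂ a)))]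
    simp only [ModAux.sRepr]
    exact Finset.sum_congr rfl fun i _ => by rw [hchar]
  rw [lhs_eq, rhs_eq]
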